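/- Let G be a parity game. If G is not k-transducer live, then there exists a k-transducer T for Player 1 such that some position of the product game G̃ that is reachable from (ι, s) is losing for Player 2. -/

import Mathlib

/-- A two-player game arena: Player 1 plays actions from `A` at `V1`-vertices,
Player 2 plays actions from `B` at `V2`-vertices. `F1`/`F2` are the colorings. -/
structure Game (V1 V2 A B : Type) where
  E1 : V1 → A → V2
  E2 : V2 → B → V1
  init : V1
  F1 : V1 → ℕ
  F2 : V2 → ℕ

/-- A finite-state transducer with output alphabet `A`, input alphabet `B`
and state set `M`. -/
structure Transducer (A B M : Type) where
  start : M
  step : M → B → M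
  out : M → A

/-- The transition function extended to input words, starting from state `m`. -/
def Transducer.stepFrom {A B M : Type} (T : Transducer A B M) (m : M) (x : List B) : M :=
  x.foldl T.step m

/-- `L̂ : B* → A`, the output of the transducer after reading an input word. -/
def Transducer.outWord {A B M : Type} (T : Transducer A B M) (x : List B) : A :=
  T.out (T.stepFrom T.start x)

/-- The history (element of `(A×B)*`) consisting of the first `n` rounds of an
infinite word given by `a` and `b`. -/
def hist {A B : Type} (a : ℕ → A) (b : ℕ → B) (n : ℕ) : List (A × B) :=
  (List.range n).map (fun i => (a i, b i))

/-- The infinite word `a₀b₀a₁b₁…` agrees with the Player-2 strategy `σ`. -/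
def AgreesP2 {A B : Type} (σ : List (A × B) → A → B) (a : ℕ → A) (b : ℕ → B) : Prop :=
  ∀ n, b n = σ (hist a b n) (a n)

/-- The infinite word `a₀b₀a₁b₁…` agrees with the Player-1 strategy `τ`. -/
def AgreesP1 {A B : Type} (τ : List (A × B) → A) (a : ℕ → A) (b : ℕ → B) : Prop :=
  ∀ n, a n = τ (hist a b n)

/-- The Player-1 strategy `f_T` induced by a transducer `T`. -/
def Transducer.strat {A B M : Type} (T : Transducer A B M) : List (A × B) → A :=
  fun h => T.outWord (h.map Prod.snd)

/-- An infinite word agrees with the transducer `T` (for Player 1). -/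
def InfAgrees {A B M : Type} (T : Transducer A B M) (a : ℕ → A) (b : ℕ → B) : Prop :=
  AgreesP1 T.strat a b

/-- A finite word in `(A×B)*` agrees with the transducer `T` (for Player 1). -/
def FinAgrees {A B M : Type} (T : Transducer A B M) (w : List (A × B)) : Prop :=
  ∀ i : Fin w.length, (w.get i).1 = T.outWord ((w.take i.val).map Prod.snd)

/-- The infinite word given by `a`, `b` extends the finite word `w`. -/
def ExtendsWord {A B : Type} (w : List (A × B)) (a : ℕ → A) (b : ℕ → B) : Prop :=
  ∀ i : Fin w.length, a i.val = (w.get i).1 ∧ b i.val = (w.get i).2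

/-- The Player-1 vertices `u₀ u₁ u₂ …` of the play generated by the word
`a₀b₀a₁b₁…` from the Player-1 vertex `u0`. -/
def Game.playU {V1 V2 A B : Type} (G : Game V1 V2 A B) (u0 : V1) (a : ℕ → A) (b : ℕ → B) :
    ℕ → V1
  | 0 => u0
  | n + 1 => G.E2 (G.E1 (G.playU u0 a b n) (a n)) (b n)

/-- The sequence of colors `F(u₀) F(v₀) F(u₁) F(v₁) …` along the play generated
by the word `a₀b₀a₁b₁…` from `u0`. -/
def Game.colorSeq {V1 V2 A B : Type} (G : Game V1 V2 A B) (u0 : V1) (a : ℕ → A) (b : ℕ → B)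
    (n : ℕ) : ℕ :=
  if n % 2 = 0 then G.F1 (G.playU u0 a b (n / 2))
  else G.F2 (G.E1 (G.playU u0 a b (n / 2)) (a (n / 2)))

/-- Reachability winning condition for Player 2: some vertex of color 2 occurs. -/
def Game.reachWin {V1 V2 A B : Type} (G : Game V1 V2 A B) (u0 : V1) (a : ℕ → A) (b : ℕ → B) :
    Prop :=
  ∃ n, G.colorSeq u0 a b n = 2

/-- Parity winning condition for Player 2: the largest color occurring infinitely
often along the play is even. -/
def Game.parityWin {V1 V2 A B : Type} (G : Game V1 V2 A B) (u0 : V1) (a : ℕ → A) (b : ℕ → B) :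
    Prop :=
  ∃ c, Even c ∧ {n | G.colorSeq u0 a b n = c}.Infinite ∧
    ∀ d, {n | G.colorSeq u0 a b n = d}.Infinite → d ≤ c

/-- `G` is `k`-transducer live (for the parity winning condition): every finite word
agreeing with some `k`-transducer for Player 1 can be extended to an infinite word that
agrees with some `k`-transducer for Player 1 and whose play is winning for Player 2. -/
def Game.kLiveParity {V1 V2 A B : Type} (G : Game V1 V2 A B) (k : ℕ) : Prop :=
  ∀ w : List (A × B), (∃ T : Transducer A B (Fin k), FinAgrees T w) →
    ∃ a b, ExtendsWord w a b ∧ (∃ T : Transducer A B (Fin k), InfAgrees T a b) ∧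
      G.parityWin G.init a b

/-- `G` is `k`-transducer live (for the reachability winning condition). -/
def Game.kLiveReach {V1 V2 A B : Type} (G : Game V1 V2 A B) (k : ℕ) : Prop :=
  ∀ w : List (A × B), (∃ T : Transducer A B (Fin k), FinAgrees T w) →
    ∃ a b, ExtendsWord w a b ∧ (∃ T : Transducer A B (Fin k), InfAgrees T a b) ∧
      G.reachWin G.init a b

/-- The history of the unique word that agrees with the Player-1 strategy `τ` and
the Player-2 strategy `σ`. -/
def inducedHist {A B : Type} (τ : List (A × B) → A) (σ : List (A × B) → A → B) :
    ℕ → List (A × B)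
  | 0 => []
  | n + 1 =>
      let h := inducedHist τ σ n
      h ++ [(τ h, σ h (τ h))]

/-- The Player-1 actions of the unique word agreeing with `τ` and `σ`. -/
def inducedA {A B : Type} (τ : List (A × B) → A) (σ : List (A × B) → A → B) (n : ℕ) : A :=
  τ (inducedHist τ σ n)

/-- The Player-2 actions of the unique word agreeing with `τ` and `σ`. -/
def inducedB {A B : Type} (τ : List (A × B) → A) (σ : List (A × B) → A → B) (n : ℕ) : B :=
  σ (inducedHist τ σ n) (inducedA τ σ n)

/-- The Player-1 vertices `u₀ u₁ …` of the play generated from a **Player-2**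
vertex `v0` by the word `b₀a₀b₁a₁…` (Player 2 moves first). -/
def Game.playV2U {V1 V2 A B : Type} (G : Game V1 V2 A B) (v0 : V2) (b : ℕ → B) (a : ℕ → A) :
    ℕ → V1
  | 0 => G.E2 v0 (b 0)
  | n + 1 => G.E2 (G.E1 (G.playV2U v0 b a n) (a n)) (b (n + 1))

/-- The sequence of colors `F(v₀) F(u₀) F(v₁) F(u₁) …` along the play generated
from the Player-2 vertex `v0` by the word `b₀a₀b₁a₁…`. -/
def Game.colorSeqV2 {V1 V2 A B : Type} (G : Game V1 V2 A B) (v0 : V2) (b : ℕ → B) (a : ℕ → A)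
    (n : ℕ) : ℕ :=
  if n = 0 then G.F2 v0
  else if n % 2 = 1 then G.F1 (G.playV2U v0 b a ((n - 1) / 2))
  else G.F2 (G.E1 (G.playV2U v0 b a ((n - 2) / 2)) (a ((n - 2) / 2)))

/-- Parity winning condition for Player 2 for plays starting at a Player-2 vertex. -/
def Game.parityWinV2 {V1 V2 A B : Type} (G : Game V1 V2 A B) (v0 : V2) (b : ℕ → B)
    (a : ℕ → A) : Prop :=
  ∃ c, Even c ∧ {n | G.colorSeqV2 v0 b a n = c}.Infinite ∧
    ∀ d, {n | G.colorSeqV2 v0 b a n = d}.Infinite → d ≤ c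

/-- Histories for plays starting at a Player-2 vertex. -/
def histV2 {A B : Type} (b : ℕ → B) (a : ℕ → A) (n : ℕ) : List (B × A) :=
  (List.range n).map (fun i => (b i, a i))

/-- Agreement with a Player-2 strategy for plays starting at a Player-2 vertex. -/
def AgreesP2V2 {A B : Type} (τ : List (B × A) → B) (b : ℕ → B) (a : ℕ → A) : Prop :=
  ∀ n, b n = τ (histV2 b a n)

/-- A Player-1 position `u0` is winning for Player 2 in the parity game `G`. -/
def Game.WinFromV1 {V1 V2 A B : Type} (G : Game V1 V2 A B) (u0 : V1) : Prop :=
  ∃ σ : List (A × B) → A → B, ∀ a b, AgreesP2 σ a b → G.parityWin u0 a b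

/-- A Player-2 position `v0` is winning for Player 2 in the parity game `G`. -/
def Game.WinFromV2 {V1 V2 A B : Type} (G : Game V1 V2 A B) (v0 : V2) : Prop :=
  ∃ τ : List (B × A) → B, ∀ b a, AgreesP2V2 τ b a → G.parityWinV2 v0 b a

/-- A position of `G` (belonging to either player) is winning for Player 2. -/
def Game.WinPos {V1 V2 A B : Type} (G : Game V1 V2 A B) : V1 ⊕ V2 → Prop :=
  Sum.elim G.WinFromV1 G.WinFromV2

/-- The positions reachable from the initial vertex by finite sequences of actions. -/
inductive Game.ReachPos {V1 V2 A B : Type} (G : Game V1 V2 A B) : V1 ⊕ V2 → Prop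
  | base : G.ReachPos (Sum.inl G.init)
  | step1 (u : V1) (x : A) : G.ReachPos (Sum.inl u) → G.ReachPos (Sum.inr (G.E1 u x))
  | step2 (v : V2) (y : B) : G.ReachPos (Sum.inr v) → G.ReachPos (Sum.inl (G.E2 v y))

/-- The product game `G̃` of a parity game `G` and a transducer `T` for Player 1,
where any Player-1 action deviating from `T` leads to the Player-2-winning
vertex `top`. -/
def Game.prod {V1 V2 A B M : Type} [DecidableEq A] (G : Game V1 V2 A B)
    (T : Transducer A B M) (top : V2) : Game (V1 × M) (V2 × M) A B where
  E1 := fun p x => if x = T.out p.2 then (G.E1 p.1 x, p.2) else (top, p.2)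
  E2 := fun p y => (G.E2 p.1 y, T.step p.2 y)
  init := (G.init, T.start)
  F1 := fun p => G.F1 p.1
  F2 := fun p => G.F2 p.1

section Aux

variable {V1 V2 A B M : Type}

/-- The Player-1 vertex reached from `init` after playing the finite word `w`. -/
def Game.playW (G : Game V1 V2 A B) (w : List (A × B)) : V1 :=
  w.foldl (fun u p => G.E2 (G.E1 u p.1) p.2) G.init

lemma reach_playW (G : Game V1 V2 A B) (w : List (A × B)) :
    G.ReachPos (Sum.inl (G.playW w)) := by
  induction w using List.reverseRecOn with
  | nil => exact Game.ReachPos.base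
  | append_singleton w p ih =>
      simpa [Game.playW, List.foldl_append] using
        Game.ReachPos.step2 _ p.2 (Game.ReachPos.step1 _ p.1 ih)

lemma stepFrom_append (T : Transducer A B M) (m : M) (x y : List B) :
    T.stepFrom m (x ++ y) = T.stepFrom (T.stepFrom m x) y := by
  simp [Transducer.stepFrom, List.foldl_append]

lemma finAgrees_append (T : Transducer A B M) (w : List (A × B)) (p : A × B)
    (h : FinAgrees T (w ++ [p])) :
    FinAgrees T w ∧ p.1 = T.outWord (w.map Prod.snd) := by
  constructor
  · intro i
    have := h ⟨i.1, by simp⟩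
    simpa [List.getElem_append, i.isLt, List.take_append,
      Nat.sub_eq_zero_of_le (le_of_lt i.isLt)] using this
  · have := h ⟨w.length, by simp⟩
    simpa [List.getElem_concat_length, List.take_left] using this

lemma extendsWord_append (w : List (A × B)) (p : A × B) (a : ℕ → A) (b : ℕ → B)
    (h : ExtendsWord (w ++ [p]) a b) :
    ExtendsWord w a b ∧ a w.length = p.1 ∧ b w.length = p.2 := by
  refine ⟨fun i => ?_, ?_, ?_⟩
  · have := h ⟨i.1, by simp⟩
    simpa [List.getElem_append, i.isLt] using this
  · have := (h ⟨w.length, by simp⟩).1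
    simpa [List.getElem_concat_length] using this
  · have := (h ⟨w.length, by simp⟩).2
    simpa [List.getElem_concat_length] using this

lemma playU_extends (G : Game V1 V2 A B) (w : List (A × B)) (a : ℕ → A) (b : ℕ → B)
    (h : ExtendsWord w a b) :
    G.playU G.init a b w.length = G.playW w := by
  induction w using List.reverseRecOn with
  | nil => rfl
  | append_singleton w p ih =>
      obtain ⟨h1, h2, h3⟩ := extendsWord_append w p a b h
      have : (w ++ [p]).length = w.length + 1 := by simp
      rw [this]
      show G.E2 (G.E1 (G.playU G.init a b w.length) (a w.length)) (b w.length) = _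
      rw [ih h1, h2, h3]
      simp [Game.playW, List.foldl_append]

lemma prod_playW [DecidableEq A] (G : Game V1 V2 A B) (T : Transducer A B M) (top : V2)
    (w : List (A × B)) (hw : FinAgrees T w) :
    (G.prod T top).playW w = (G.playW w, T.stepFrom T.start (w.map Prod.snd)) := by
  induction w using List.reverseRecOn with
  | nil => rfl
  | append_singleton w p ih =>
      obtain ⟨h1, h2⟩ := finAgrees_append T w p hw
      have hout : p.1 = T.out (T.stepFrom T.start (w.map Prod.snd)) := h2
      simp only [Game.playW, List.foldl_append, List.foldl_cons, List.foldl_nil] at *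
      rw [ih h1]
      simp [Game.prod, hout, Transducer.stepFrom, List.foldl_append]

lemma playU_shift (G : Game V1 V2 A B) (u0 : V1) (a : ℕ → A) (b : ℕ → B) (n : ℕ) :
    ∀ j, G.playU u0 a b (n + j)
      = G.playU (G.playU u0 a b n) (fun i => a (n + i)) (fun i => b (n + i)) j := by
  intro j
  induction j with
  | zero => rfl
  | succ j ih =>
      show G.playU u0 a b ((n + j) + 1) = _
      show G.E2 (G.E1 (G.playU u0 a b (n + j)) (a (n + j))) (b (n + j)) = _
      rw [ih]; rfl

lemma prod_playU [DecidableEq A] (G : Game V1 V2 A B) (T : Transducer A B M) (top : V2)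
    (u0 : V1) (m0 : M) (a : ℕ → A) (b : ℕ → B)
    (ha : ∀ j, a j = T.out (T.stepFrom m0 ((List.range j).map b))) :
    ∀ j, (G.prod T top).playU (u0, m0) a b j
      = (G.playU u0 a b j, T.stepFrom m0 ((List.range j).map b)) := by
  intro j
  induction j with
  | zero => simp [Game.playU, Transducer.stepFrom]
  | succ j ih =>
      show (G.prod T top).E2 ((G.prod T top).E1 ((G.prod T top).playU (u0, m0) a b j) (a j)) (b j) = _
      have hstep : G.playU u0 a b (j + 1)
          = G.E2 (G.E1 (G.playU u0 a b j) (a j)) (b j) := rfl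
      rw [ih, hstep]
      simp [Game.prod, ha j, List.range_succ, Transducer.stepFrom, List.foldl_append]

lemma prod_colorSeq [DecidableEq A] (G : Game V1 V2 A B) (T : Transducer A B M) (top : V2)
    (u0 : V1) (m0 : M) (a : ℕ → A) (b : ℕ → B)
    (ha : ∀ j, a j = T.out (T.stepFrom m0 ((List.range j).map b))) (n : ℕ) :
    (G.prod T top).colorSeq (u0, m0) a b n = G.colorSeq u0 a b n := by
  unfold Game.colorSeq
  rw [prod_playU G T top u0 m0 a b ha]
  by_cases h : n % 2 = 0 <;> simp [h, Game.prod, ha (n / 2)]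

lemma hist_induced (τ : List (A × B) → A) (σ : List (A × B) → A → B) (n : ℕ) :
    hist (inducedA τ σ) (inducedB τ σ) n = inducedHist τ σ n := by
  induction n with
  | zero => simp [hist, inducedHist]
  | succ n ih =>
      show (List.range (n + 1)).map _ = _
      rw [List.range_succ, List.map_append]
      show hist (inducedA τ σ) (inducedB τ σ) n ++ _ = _
      rw [ih]
      simp [inducedHist, inducedA, inducedB, ih]

lemma inf_shift (f : ℕ → ℕ) (s c : ℕ) :
    {m | f (s + m) = c}.Infinite ↔ {N | f N = c}.Infinite := by
  constructor
  · intro h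
    have himg : ((fun m => s + m) '' {m | f (s + m) = c}).Infinite :=
      h.image (Set.injOn_of_injective (fun x y => by omega))
    refine himg.mono ?_
    rintro N ⟨m, hm, rfl⟩
    exact hm
  · intro h
    by_contra hfin
    rw [Set.not_infinite] at hfin
    have : {N | f N = c} ⊆ (fun m => s + m) '' {m | f (s + m) = c} ∪ Set.Iio s := by
      intro N hN
      rcases lt_or_ge N s with hlt | hge
      · exact Or.inr hlt
      · exact Or.inl ⟨N - s, by simpa [Nat.add_sub_cancel' hge] using hN, by show s + (N - s) = N; omega⟩
    exact h ((hfin.image _).union (Set.finite_Iio s) |>.subset this)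

end Aux

/-- **Claim 2.** Let `G` be a parity game. If `G` is not
`k`-transducer live, then there is a `k`-transducer `T` for Player 1 such that some
position of the product game `G̃` reachable from `(ι, s)` is losing for Player 2. -/
theorem not_live_implies_losing_reachable_product_position
    {V1 V2 A B : Type} [Fintype V1] [Fintype V2] [Fintype A] [Fintype B]
    [DecidableEq A] [Nonempty A] [Nonempty B]
    (G : Game V1 V2 A B) (k : ℕ)
    (top : V2) (htop : ∀ (b : ℕ → B) (a : ℕ → A), G.parityWinV2 top b a)
    (hnotlive : ¬ G.kLiveParity k) :
    ∃ (T : Transducer A B (Fin k)) (p : (V1 × Fin k) ⊕ (V2 × Fin k)),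
      (G.prod T top).ReachPos p ∧ ¬ (G.prod T top).WinPos p := by
  rw [Game.kLiveParity] at hnotlive
  push_neg at hnotlive
  obtain ⟨w, ⟨T, hT⟩, hbad⟩ := hnotlive
  classical
  set n := w.length with hn
  set mW := T.stepFrom T.start (w.map Prod.snd) with hmW
  set uW := G.playW w with huW
  refine ⟨T, Sum.inl (uW, mW), ?_, ?_⟩
  · have h := reach_playW (G.prod T top) w
    rwa [prod_playW G T top w hT] at h
  · intro hwin
    obtain ⟨σ, hσ⟩ := (hwin : (G.prod T top).WinFromV1 (uW, mW))
    set τ : List (A × B) → A := fun h => T.outWord (w.map Prod.snd ++ h.map Prod.snd)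
      with hτ
    set a' := inducedA τ σ with ha'def
    set b' := inducedB τ σ with hb'def
    have hA2 : AgreesP2 σ a' b' := by
      intro j
      show inducedB τ σ j = _
      rw [hist_induced]; rfl
    have ha'w : ∀ j, a' j = T.outWord (w.map Prod.snd ++ (List.range j).map b') := by
      intro j
      have h1 : (hist a' b' j).map Prod.snd = (List.range j).map b' := by
        simp only [hist, List.map_map]
        exact List.map_congr_left fun x _ => rfl
      have h2 : a' j = τ (hist a' b' j) := by
        show a' j = τ (hist (inducedA τ σ) (inducedB τ σ) j)
        rw [hist_induced]; rfl
      rw [h2, hτ]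
      simp only []
      rw [h1]
    have ha'out : ∀ j, a' j = T.out (T.stepFrom mW ((List.range j).map b')) := by
      intro j
      rw [ha'w j]
      simp only [Transducer.outWord, stepFrom_append, ← hmW]
    have hwin' := hσ a' b' hA2
    set a : ℕ → A := fun i => if h : i < n then (w.get ⟨i, h⟩).1 else a' (i - n) with hadef
    set b : ℕ → B := fun i => if h : i < n then (w.get ⟨i, h⟩).2 else b' (i - n) with hbdef
    have hext : ExtendsWord w a b := by
      intro i
      constructor <;> simp [hadef, hbdef, i.isLt, hn]
    have ha2 : ∀ j, a (n + j) = a' j := by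
      intro j
      rw [hadef]
      simp only []
      rw [dif_neg (by omega)]
      congr 1; omega
    have hb2 : ∀ j, b (n + j) = b' j := by
      intro j
      rw [hbdef]
      simp only []
      rw [dif_neg (by omega)]
      congr 1; omega
    have hbpre : ∀ i, i ≤ n → (List.range i).map b = (w.take i).map Prod.snd := by
      intro i hi
      apply List.ext_getElem
      · simp; omega
      · intro j h1 h2
        simp only [List.length_map, List.length_range] at h1
        have hj : j < n := by omega
        simp [hbdef, hj, hi]
    have hbfull : ∀ i, n ≤ i →
        (List.range i).map b = w.map Prod.snd ++ (List.range (i - n)).map b' := by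
      intro i hi
      obtain ⟨j, rfl⟩ : ∃ j, i = n + j := ⟨i - n, by omega⟩
      rw [Nat.add_sub_cancel_left, List.range_add, List.map_append, List.map_map,
        hbpre n le_rfl]
      have hwt : w.take n = w := by rw [hn]; exact List.take_length
      rw [hwt]
      congr 1
      exact List.map_congr_left fun x _ => hb2 x
    have hinf : InfAgrees T a b := by
      intro i
      show a i = T.outWord ((hist a b i).map Prod.snd)
      have hmap : (hist a b i).map Prod.snd = (List.range i).map b := by
        simp [hist, List.map_map, Function.comp]
      rw [hmap]
      rcases lt_or_ge i n with hlt | hge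
      · rw [hbpre i (le_of_lt hlt)]
        have h := hT ⟨i, hlt⟩
        simpa [hadef, hlt] using h
      · rw [hbfull i hge]
        have h : a i = a' (i - n) := by
          rw [hadef]; simp only []; rw [dif_neg (by omega)]
        rw [h, ha'w]
    have hplayn : G.playU G.init a b n = uW := playU_extends G w a b hext
    have hsa : (fun i => a (n + i)) = a' := funext ha2
    have hsb : (fun i => b (n + i)) = b' := funext hb2
    have hcol : ∀ m, G.colorSeq G.init a b (2 * n + m)
        = (G.prod T top).colorSeq (uW, mW) a' b' m := by
      intro m
      rw [prod_colorSeq G T top uW mW a' b' ha'out m]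
      unfold Game.colorSeq
      have h1 : (2 * n + m) % 2 = m % 2 := by omega
      have h2 : (2 * n + m) / 2 = n + m / 2 := by omega
      rw [h1, h2, playU_shift G G.init a b n (m / 2), hplayn, hsa, hsb, ha2 (m / 2)]
    obtain ⟨c, hc, hinf', hmax⟩ := hwin'
    have hset : ∀ d, {m | (G.prod T top).colorSeq (uW, mW) a' b' m = d}
        = {m | G.colorSeq G.init a b (2 * n + m) = d} := by
      intro d; ext m; simp [hcol m]
    have hparG : G.parityWin G.init a b := by
      refine ⟨c, hc, ?_, ?_⟩
      · have hinfc : {m | G.colorSeq G.init a b (2 * n + m) = c}.Infinite := by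
          rw [← hset c]; exact hinf'
        exact (inf_shift (G.colorSeq G.init a b) (2 * n) c).mp hinfc
      · intro d hd
        apply hmax d
        rw [hset d]
        exact (inf_shift (G.colorSeq G.init a b) (2 * n) d).mpr hd
    exact hbad a b hext ⟨T, hinf⟩ hparG
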